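/- Let A be an object of a braided monoidal category C with braiding b, and let t₁, t₂, t₃, t₄ : A ⊗ A ⟶ A ⊗ A and e : A ⟶ I be morphisms such that (t₁, t₂, e) is a multiplier bimonoid in C and (t₃, t₄, e) is a multiplier bimonoid in C̄ (the same category with inverse braiding b⁻¹). Then the following are equivalent: (1) (t₁, t₂, t₃, t₄, e) is a regular multiplier bimonoid in C; (2) (t₂, t₁, t₄, t₃, e) is a regular multiplier bimonoid in the reverse monoidal category C^rev; (3) (t₃, t₄, t₁, t₂, e) is a regular multiplier bimonoid in C̄; (4) (t₄, t₃, t₂, t₁, e) is a regular multiplier bimonoid in C̄^rev. (Each condition is a finite list of equations among composites of the tᵢ, e, b and b⁻¹ in C, obtained from the axioms (A), (B), (A^rev), (B^rev), (C) below by the corresponding reversal of the tensor product and/or replacement of b by b⁻¹.) -/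

import Mathlib

open CategoryTheory Category MonoidalCategory

universe v u

variable {C : Type u} [Category.{v} C] [MonoidalCategory C] [BraidedCategory C]

/-- The fusion equation for `t : A ⊗ A ⟶ A ⊗ A`, relative to a braiding
isomorphism `bb` on `A ⊗ A` (domain `A ⊗ (A ⊗ A)`).  With `bb = β_ A A` this is
the fusion equation in `C`; with `bb = (β_ A A).symm` it is the fusion equation in
`C̄`, the same category with the inverse braiding. -/
def FusionEqB (A : C) (bb : A ⊗ A ≅ A ⊗ A) (t : A ⊗ A ⟶ A ⊗ A) : Prop :=
  (A ◁ t) ≫ (α_ A A A).inv ≫ (bb.hom ▷ A) ≫ (α_ A A A).hom ≫ (A ◁ t) ≫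
      (α_ A A A).inv ≫ (bb.inv ▷ A) ≫ (t ▷ A) ≫ (α_ A A A).hom =
    (α_ A A A).inv ≫ (t ▷ A) ≫ (α_ A A A).hom ≫ (A ◁ t)

/-- The fusion equation in the reverse monoidal category, relative to a braiding
isomorphism `bb` on `A ⊗ A` (domain `(A ⊗ A) ⊗ A`). -/
def RevFusionEqB (A : C) (bb : A ⊗ A ≅ A ⊗ A) (t : A ⊗ A ⟶ A ⊗ A) : Prop :=
  (t ▷ A) ≫ (α_ A A A).hom ≫ (A ◁ bb.hom) ≫ (α_ A A A).inv ≫ (t ▷ A) ≫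
      (α_ A A A).hom ≫ (A ◁ bb.inv) ≫ (A ◁ t) ≫ (α_ A A A).inv =
    (α_ A A A).hom ≫ (A ◁ t) ≫ (α_ A A A).inv ≫ (t ▷ A)

/-- The compatibility `(t₂ ⊗ 1) ≫ (1 ⊗ t₁) = (1 ⊗ t₁) ≫ (t₂ ⊗ 1)`. -/
def CompatEq (A : C) (t₁ t₂ : A ⊗ A ⟶ A ⊗ A) : Prop :=
  (t₂ ▷ A) ≫ (α_ A A A).hom ≫ (A ◁ t₁) ≫ (α_ A A A).inv =
    (α_ A A A).hom ≫ (A ◁ t₁) ≫ (α_ A A A).inv ≫ (t₂ ▷ A)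

/-- `(t₁, t₂, e)` is a multiplier bimonoid on `A`, relative to the braiding
isomorphism `bb` on `A ⊗ A`.  With `bb = β_ A A` this is the notion of multiplier
bimonoid in `C`; with `bb = (β_ A A).symm` it is the notion in `C̄`.  (Moreover,
`(t₂, t₁, e)` is a multiplier bimonoid in `C^rev` precisely when
`MBM A bb t₁ t₂ e`.) -/
def MBM (A : C) (bb : A ⊗ A ≅ A ⊗ A) (t₁ t₂ : A ⊗ A ⟶ A ⊗ A) (e : A ⟶ 𝟙_ C) :
    Prop :=
  FusionEqB A bb t₁ ∧ (t₁ ≫ (A ◁ e) = A ◁ e) ∧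
  RevFusionEqB A bb t₂ ∧ (t₂ ≫ (e ▷ A) = e ▷ A) ∧
  CompatEq A t₁ t₂ ∧
  (t₁ ≫ (e ▷ A) ≫ (λ_ A).hom = t₂ ≫ (A ◁ e) ≫ (ρ_ A).hom)

/-- Axiom (A): `(b ⊗ 1) ≫ (t₃ ⊗ 1) ≫ (1 ⊗ m) = (1 ⊗ t₁) ≫ (b ⊗ 1) ≫ (1 ⊗ m)`. -/
def AxA (A : C) (b : A ⊗ A ⟶ A ⊗ A) (t₁ t₃ : A ⊗ A ⟶ A ⊗ A) (m : A ⊗ A ⟶ A) :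
    Prop :=
  (b ▷ A) ≫ (t₃ ▷ A) ≫ (α_ A A A).hom ≫ (A ◁ m) =
    (α_ A A A).hom ≫ (A ◁ t₁) ≫ (α_ A A A).inv ≫ (b ▷ A) ≫ (α_ A A A).hom ≫
      (A ◁ m)

/-- Axiom (B): `(1 ⊗ t₁) ≫ (t₄ ⊗ 1) = (t₄ ⊗ 1) ≫ (1 ⊗ t₁)`. -/
def AxB (A : C) (t₁ t₄ : A ⊗ A ⟶ A ⊗ A) : Prop :=
  (α_ A A A).hom ≫ (A ◁ t₁) ≫ (α_ A A A).inv ≫ (t₄ ▷ A) =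
    (t₄ ▷ A) ≫ (α_ A A A).hom ≫ (A ◁ t₁) ≫ (α_ A A A).inv

/-- Axiom (A^rev): `(1 ⊗ b) ≫ (1 ⊗ t₄) ≫ (m ⊗ 1) = (t₂ ⊗ 1) ≫ (1 ⊗ b) ≫ (m ⊗ 1)`. -/
def AxArev (A : C) (b : A ⊗ A ⟶ A ⊗ A) (t₂ t₄ : A ⊗ A ⟶ A ⊗ A) (m : A ⊗ A ⟶ A) :
    Prop :=
  (α_ A A A).hom ≫ (A ◁ b) ≫ (A ◁ t₄) ≫ (α_ A A A).inv ≫ (m ▷ A) =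
    (t₂ ▷ A) ≫ (α_ A A A).hom ≫ (A ◁ b) ≫ (α_ A A A).inv ≫ (m ▷ A)

/-- Axiom (B^rev): `(t₂ ⊗ 1) ≫ (1 ⊗ t₃) = (1 ⊗ t₃) ≫ (t₂ ⊗ 1)`. -/
def AxBrev (A : C) (t₂ t₃ : A ⊗ A ⟶ A ⊗ A) : Prop :=
  (t₂ ▷ A) ≫ (α_ A A A).hom ≫ (A ◁ t₃) ≫ (α_ A A A).inv =
    (α_ A A A).hom ≫ (A ◁ t₃) ≫ (α_ A A A).inv ≫ (t₂ ▷ A)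

/-- Axiom (C): `b⁻¹ ≫ t₁ ≫ (e ⊗ 1) = t₃ ≫ (e ⊗ 1)`. -/
def AxC (A : C) (binv : A ⊗ A ⟶ A ⊗ A) (t₁ t₃ : A ⊗ A ⟶ A ⊗ A) (e : A ⟶ 𝟙_ C) :
    Prop :=
  binv ≫ t₁ ≫ (e ▷ A) = t₃ ≫ (e ▷ A)

/-- The reverse-monoidal form of axiom (C): `b⁻¹ ≫ t₂ ≫ (1 ⊗ e) = t₄ ≫ (1 ⊗ e)`. -/
def AxCrev (A : C) (binv : A ⊗ A ⟶ A ⊗ A) (t₂ t₄ : A ⊗ A ⟶ A ⊗ A) (e : A ⟶ 𝟙_ C) :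
    Prop :=
  binv ≫ t₂ ≫ (A ◁ e) = t₄ ≫ (A ◁ e)

/-- `(t₁, t₂, t₃, t₄, e)` is a regular multiplier bimonoid, relative to the
braiding isomorphism `bb`.  With `bb = β_ A A` this is the notion of regular
multiplier bimonoid in `C`; with `bb = (β_ A A).symm` it is the notion in `C̄`. -/
def RegMBM (A : C) (bb : A ⊗ A ≅ A ⊗ A) (t₁ t₂ t₃ t₄ : A ⊗ A ⟶ A ⊗ A)
    (e : A ⟶ 𝟙_ C) : Prop :=
  MBM A bb t₁ t₂ e ∧ MBM A bb.symm t₃ t₄ e ∧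
  AxA A bb.hom t₁ t₃ (t₁ ≫ (e ▷ A) ≫ (λ_ A).hom) ∧
  AxB A t₁ t₄ ∧
  AxArev A bb.hom t₂ t₄ (t₁ ≫ (e ▷ A) ≫ (λ_ A).hom) ∧
  AxBrev A t₂ t₃ ∧
  AxC A bb.inv t₁ t₃ e

/-- `(t₂, t₁, t₄, t₃, e)` is a regular multiplier bimonoid in the reverse monoidal
category (with braiding corresponding to `bb`), expressed by equations in `C`:
each axiom of `RegMBM` is transported along the reversal of the monoidal
product. -/
def RegMBMrev (A : C) (bb : A ⊗ A ≅ A ⊗ A) (t₁ t₂ t₃ t₄ : A ⊗ A ⟶ A ⊗ A)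
    (e : A ⟶ 𝟙_ C) : Prop :=
  MBM A bb t₁ t₂ e ∧ MBM A bb.symm t₃ t₄ e ∧
  AxA A bb.hom t₁ t₃ (t₂ ≫ (A ◁ e) ≫ (ρ_ A).hom) ∧
  AxB A t₁ t₄ ∧
  AxArev A bb.hom t₂ t₄ (t₂ ≫ (A ◁ e) ≫ (ρ_ A).hom) ∧
  AxBrev A t₂ t₃ ∧
  AxCrev A bb.inv t₂ t₄ e

section Aux

open BraidedCategory

/-- Naturality of the two "double crossing" composites built from `bi`.
With `b = (β_ A A).hom`, `bi = (β_ A A).inv`, the first composite is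
`(β_ A (A ⊗ A)).inv` and the second is `(β_ (A ⊗ A) A).inv`.  With the roles of
`b` and `bi` exchanged they are `(β_ (A ⊗ A) A).hom` and `(β_ A (A ⊗ A)).hom`. -/
def XNat (A : C) (bi : A ⊗ A ⟶ A ⊗ A) : Prop :=
  (∀ f : A ⊗ A ⟶ A ⊗ A,
      (f ▷ A) ≫ ((α_ A A A).hom ≫ A ◁ bi ≫ (α_ A A A).inv ≫ bi ▷ A ≫ (α_ A A A).hom) =
        ((α_ A A A).hom ≫ A ◁ bi ≫ (α_ A A A).inv ≫ bi ▷ A ≫ (α_ A A A).hom) ≫ (A ◁ f)) ∧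
  (∀ f : A ⊗ A ⟶ A ⊗ A,
      (A ◁ f) ≫ ((α_ A A A).inv ≫ bi ▷ A ≫ (α_ A A A).hom ≫ A ◁ bi ≫ (α_ A A A).inv) =
        ((α_ A A A).inv ≫ bi ▷ A ≫ (α_ A A A).hom ≫ A ◁ bi ≫ (α_ A A A).inv) ≫ (f ▷ A))

/-- The sliding (naturality) properties of a braiding-like isomorphism `bb` and
its inverse needed for the symmetry of the regular multiplier bimonoid axioms. -/
def Slides (A : C) (bb : A ⊗ A ≅ A ⊗ A) : Prop :=
  XNat A bb.inv ∧ XNat A bb.hom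

lemma xNat_braiding_inv (A : C) : XNat A (β_ A A).inv :=
  ⟨fun f => by rw [← braiding_tensor_right_inv]; exact braiding_inv_naturality_left f A,
   fun f => by rw [← braiding_tensor_left_inv]; exact braiding_inv_naturality_right A f⟩

lemma xNat_braiding_hom (A : C) : XNat A (β_ A A).hom :=
  ⟨fun f => by rw [← braiding_tensor_left_hom]; exact braiding_naturality_left f A,
   fun f => by rw [← braiding_tensor_right_hom]; exact braiding_naturality_right A f⟩

lemma slides_braiding (A : C) : Slides A (β_ A A) :=
  ⟨xNat_braiding_inv A, xNat_braiding_hom A⟩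

lemma slides_symm {A : C} {bb : A ⊗ A ≅ A ⊗ A} (h : Slides A bb) : Slides A bb.symm :=
  ⟨h.2, h.1⟩

/-- A regular multiplier bimonoid in `C` is the same thing as one in `C^rev`. -/
lemma reg_iff_rev {A : C} {bb : A ⊗ A ≅ A ⊗ A} {t₁ t₂ t₃ t₄ : A ⊗ A ⟶ A ⊗ A}
    {e : A ⟶ 𝟙_ C} :
    RegMBM A bb t₁ t₂ t₃ t₄ e ↔ RegMBMrev A bb t₁ t₂ t₃ t₄ e := by
  constructor
  · rintro ⟨h12, h34, hA, hB, hAr, hBr, hC⟩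
    have hm12 : t₁ ≫ (e ▷ A) ≫ (λ_ A).hom = t₂ ≫ (A ◁ e) ≫ (ρ_ A).hom :=
      h12.2.2.2.2.2
    have hm34 : t₃ ≫ (e ▷ A) ≫ (λ_ A).hom = t₄ ≫ (A ◁ e) ≫ (ρ_ A).hom :=
      h34.2.2.2.2.2
    refine ⟨h12, h34, by rw [← hm12]; exact hA, hB, by rw [← hm12]; exact hAr, hBr, ?_⟩
    have key1 : bb.inv ≫ t₂ ≫ (A ◁ e) ≫ (ρ_ A).hom = t₄ ≫ (A ◁ e) ≫ (ρ_ A).hom := by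
      rw [← hm12, ← hm34, reassoc_of% hC]
    show bb.inv ≫ t₂ ≫ (A ◁ e) = t₄ ≫ (A ◁ e)
    rw [← cancel_mono (ρ_ A).hom]
    simpa only [Category.assoc] using key1
  · rintro ⟨h12, h34, hA, hB, hAr, hBr, hC⟩
    have hm12 : t₁ ≫ (e ▷ A) ≫ (λ_ A).hom = t₂ ≫ (A ◁ e) ≫ (ρ_ A).hom :=
      h12.2.2.2.2.2
    have hm34 : t₃ ≫ (e ▷ A) ≫ (λ_ A).hom = t₄ ≫ (A ◁ e) ≫ (ρ_ A).hom :=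
      h34.2.2.2.2.2
    refine ⟨h12, h34, by rw [hm12]; exact hA, hB, by rw [hm12]; exact hAr, hBr, ?_⟩
    have key1 : bb.inv ≫ t₁ ≫ (e ▷ A) ≫ (λ_ A).hom = t₃ ≫ (e ▷ A) ≫ (λ_ A).hom := by
      rw [hm12, hm34, reassoc_of% hC]
    show bb.inv ≫ t₁ ≫ (e ▷ A) = t₃ ≫ (e ▷ A)
    rw [← cancel_mono (λ_ A).hom]
    simpa only [Category.assoc] using key1

/-- The key symmetry: a regular multiplier bimonoid in `C` gives one in `C̄`. -/
lemma reg_symm {A : C} {bb : A ⊗ A ≅ A ⊗ A} {t₁ t₂ t₃ t₄ : A ⊗ A ⟶ A ⊗ A}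
    {e : A ⟶ 𝟙_ C} (hS : Slides A bb) :
    RegMBM A bb t₁ t₂ t₃ t₄ e → RegMBM A bb.symm t₃ t₄ t₁ t₂ e := by
  rintro ⟨h12, h34, hA, hB, hAr, hBr, hC⟩
  obtain ⟨⟨n2, n4⟩, -⟩ := hS
  -- `m' = b⁻¹ ≫ m`
  have hm : t₃ ≫ (e ▷ A) ≫ (λ_ A).hom =
      bb.inv ≫ t₁ ≫ (e ▷ A) ≫ (λ_ A).hom := by
    rw [← Category.assoc, ← hC]; simp only [Category.assoc]
  -- sliding variants
  have v1 : ∀ f : A ⊗ A ⟶ A ⊗ A,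
      (f ▷ A) ≫ (α_ A A A).hom ≫ A ◁ bb.inv ≫ (α_ A A A).inv ≫ bb.inv ▷ A =
        (α_ A A A).hom ≫ A ◁ bb.inv ≫ (α_ A A A).inv ≫ bb.inv ▷ A ≫
          (α_ A A A).hom ≫ A ◁ f ≫ (α_ A A A).inv := by
    intro f
    rw [← cancel_mono (α_ A A A).hom]
    simpa only [Category.assoc, Iso.inv_hom_id, Category.comp_id] using n2 f
  have v2 : ∀ f : A ⊗ A ⟶ A ⊗ A,
      (f ▷ A) ≫ (α_ A A A).hom ≫ A ◁ bb.inv =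
        (α_ A A A).hom ≫ A ◁ bb.inv ≫ (α_ A A A).inv ≫ bb.inv ▷ A ≫
          (α_ A A A).hom ≫ A ◁ f ≫ (α_ A A A).inv ≫ bb.hom ▷ A ≫ (α_ A A A).hom := by
    intro f
    rw [← cancel_mono ((α_ A A A).inv ≫ bb.inv ▷ A ≫ (α_ A A A).hom)]
    simpa only [Category.assoc, Iso.inv_hom_id, Category.comp_id, Iso.hom_inv_id_assoc,
      hom_inv_whiskerRight_assoc, inv_hom_whiskerRight_assoc] using n2 f
  have v3 : ∀ f : A ⊗ A ⟶ A ⊗ A,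
      (A ◁ f) ≫ (α_ A A A).inv ≫ bb.inv ▷ A =
        (α_ A A A).inv ≫ bb.inv ▷ A ≫ (α_ A A A).hom ≫ A ◁ bb.inv ≫
          (α_ A A A).inv ≫ f ▷ A ≫ (α_ A A A).hom ≫ A ◁ bb.hom ≫ (α_ A A A).inv := by
    intro f
    rw [← cancel_mono ((α_ A A A).hom ≫ A ◁ bb.inv ≫ (α_ A A A).inv)]
    simpa only [Category.assoc, Iso.hom_inv_id, Category.comp_id, Iso.inv_hom_id_assoc,
      whiskerLeft_hom_inv_assoc, whiskerLeft_inv_hom_assoc] using n4 f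
  have v4 : ∀ f : A ⊗ A ⟶ A ⊗ A,
      (A ◁ f) ≫ (α_ A A A).inv ≫ bb.inv ▷ A ≫ (α_ A A A).hom ≫ A ◁ bb.inv =
        (α_ A A A).inv ≫ bb.inv ▷ A ≫ (α_ A A A).hom ≫ A ◁ bb.inv ≫
          (α_ A A A).inv ≫ f ▷ A ≫ (α_ A A A).hom := by
    intro f
    rw [← cancel_mono (α_ A A A).inv]
    simpa only [Category.assoc, Iso.hom_inv_id, Category.comp_id] using n4 f
  refine ⟨h34, h12, ?_, hBr.symm, ?_, hB.symm, ?_⟩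
  · -- axiom (A) for the swapped data
    show (bb.inv ▷ A) ≫ (t₁ ▷ A) ≫ (α_ A A A).hom ≫
          (A ◁ (t₃ ≫ (e ▷ A) ≫ (λ_ A).hom)) =
        (α_ A A A).hom ≫ (A ◁ t₃) ≫ (α_ A A A).inv ≫ (bb.inv ▷ A) ≫
          (α_ A A A).hom ≫ (A ◁ (t₃ ≫ (e ▷ A) ≫ (λ_ A).hom))
    rw [hm, MonoidalCategory.whiskerLeft_comp]
    rw [reassoc_of% (v2 t₁), ← hA, reassoc_of% (v4 t₃)]
    simp only [Category.assoc, Iso.hom_inv_id_assoc, inv_hom_whiskerRight_assoc]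
  · -- axiom (A^rev) for the swapped data
    show (α_ A A A).hom ≫ (A ◁ bb.inv) ≫ (A ◁ t₂) ≫ (α_ A A A).inv ≫
          ((t₃ ≫ (e ▷ A) ≫ (λ_ A).hom) ▷ A) =
        (t₄ ▷ A) ≫ (α_ A A A).hom ≫ (A ◁ bb.inv) ≫ (α_ A A A).inv ≫
          ((t₃ ≫ (e ▷ A) ≫ (λ_ A).hom) ▷ A)
    rw [hm, MonoidalCategory.comp_whiskerRight]
    have hAr' : (A ◁ t₄) ≫ (α_ A A A).inv ≫
          ((t₁ ≫ (e ▷ A) ≫ (λ_ A).hom) ▷ A) =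
        (A ◁ bb.inv) ≫ (α_ A A A).inv ≫ (t₂ ▷ A) ≫ (α_ A A A).hom ≫
          (A ◁ bb.hom) ≫ (α_ A A A).inv ≫ ((t₁ ≫ (e ▷ A) ≫ (λ_ A).hom) ▷ A) := by
      have h := congrArg (((A ◁ bb.inv) ≫ (α_ A A A).inv) ≫ ·) hAr
      simpa only [Category.assoc, Iso.inv_hom_id_assoc,
        whiskerLeft_inv_hom_assoc] using h
    rw [reassoc_of% (v1 t₄), hAr', reassoc_of% (v3 t₂)]
  · -- axiom (C) for the swapped data
    show bb.hom ≫ t₃ ≫ (e ▷ A) = t₁ ≫ (e ▷ A)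
    rw [← hC, Iso.hom_inv_id_assoc]

end Aux

/-- Given a multiplier bimonoid `(t₁, t₂, e)` in `C` and a multiplier bimonoid
`(t₃, t₄, e)` in `C̄`, the following are equivalent:
(1) `(t₁, t₂, t₃, t₄, e)` is a regular multiplier bimonoid in `C`;
(2) `(t₂, t₁, t₄, t₃, e)` is a regular multiplier bimonoid in `C^rev`;
(3) `(t₃, t₄, t₁, t₂, e)` is a regular multiplier bimonoid in `C̄`;
(4) `(t₄, t₃, t₂, t₁, e)` is a regular multiplier bimonoid in `C̄^rev`. -/
theorem regMBM_tfae (A : C) (t₁ t₂ t₃ t₄ : A ⊗ A ⟶ A ⊗ A) (e : A ⟶ 𝟙_ C)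
    (h₁₂ : MBM A (β_ A A) t₁ t₂ e) (h₃₄ : MBM A (β_ A A).symm t₃ t₄ e) :
    List.TFAE
      [RegMBM A (β_ A A) t₁ t₂ t₃ t₄ e,
       RegMBMrev A (β_ A A) t₁ t₂ t₃ t₄ e,
       RegMBM A (β_ A A).symm t₃ t₄ t₁ t₂ e,
       RegMBMrev A (β_ A A).symm t₃ t₄ t₁ t₂ e] := by
  tfae_have 1 ↔ 2 := reg_iff_rev
  tfae_have 3 ↔ 4 := reg_iff_rev
  tfae_have 1 → 3 := reg_symm (slides_braiding A)
  tfae_have 3 → 1 := fun h => reg_symm (slides_symm (slides_braiding A)) h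
  tfae_finish
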